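/- Let M be the 4×4 stochastic matrix with rows (a,b,b,c), (d,e,f,cd/a), (d,f,e,cd/a), (a,b,b,c), all entries positive. Then with α = a(a+c−1)/(d(a+c)), the vector v₂ = (α,1,1,α)ᵀ is an eigenvector of M with eigenvalue λ₂ = (a+c)(a−d)/a. -/
import Mathlib

/-- For the 4×4 stochastic matrix `M` with rows `(a,b,b,c)`, `(d,e,f,cd/a)`,
`(d,f,e,cd/a)`, `(a,b,b,c)` (all entries positive, rows summing to 1) and
`α = a(a+c−1)/(d(a+c))`, the vector `v₂ = (α,1,1,α)ᵀ` is an eigenvector of `M` with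
eigenvalue `λ₂ = (a+c)(a−d)/a`. -/
theorem special_matrix_second_eigenvector (a b c d e f : ℝ)
    (ha : 0 < a) (hb : 0 < b) (hc : 0 < c) (hd : 0 < d) (he : 0 < e) (hf : 0 < f)
    (hrow1 : a + 2 * b + c = 1) (hrow2 : d + e + f + c * d / a = 1)
    (had : a ≠ d)
    (M : Matrix (Fin 4) (Fin 4) ℝ)
    (hM : M = !![a, b, b, c; d, e, f, c * d / a; d, f, e, c * d / a; a, b, b, c])
    (α : ℝ) (hα : α = a * (a + c - 1) / (d * (a + c))) :
    M.mulVec ![α, 1, 1, α] = ((a + c) * (a - d) / a) • ![α, 1, 1, α] := by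
  have hac : (0:ℝ) < a + c := by linarith
  have hb' : b = (1 - a - c) / 2 := by linarith
  have hf' : f = 1 - d - e - c * d / a := by linarith
  subst hM hα hb' hf'
  funext i
  fin_cases i <;>
    simp [Matrix.mulVec, dotProduct, Fin.sum_univ_four] <;>
    field_simp <;> ring
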